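/- Consider the switched quantized control system with parameter α satisfying 1 < α < 3/2 and disturbance rounding error Δ_d with 0 < |Δ_d| ≤ 1/2. If at some time k the state satisfies condition (9), then the set {(0,0), (sign(Δ_d), −sign(Δ_d))} is the smallest invariant set for the quantized state: for every H ∈ ℕ there exist integers h > H and h' > H such that (ρ(e(k+h)), ρ(ū(k+h))) = (0, 0) and (ρ(e(k+h')), ρ(ū(k+h'))) = (sign(Δ_d), −sign(Δ_d)); that is, both points of the set are visited at infinitely many times. -/
import Mathlib


/-- Sign function: 1 for positive, 0 for zero, -1 for negative. -/
noncomputable def rsign (z : ℝ) : ℤ :=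
  if 0 < z then 1 else if z = 0 then 0 else -1

/-- Rounding operator: rounds to the nearest integer, ties away from zero. -/
noncomputable def rho (z : ℝ) : ℤ :=
  if Int.fract |z| < 1/2 then rsign z * ⌊|z|⌋ else rsign z * (⌊|z|⌋ + 1)

lemma rsign_pos {z : ℝ} (h : 0 < z) : rsign z = 1 := by simp [rsign, h]

lemma rsign_neg' {z : ℝ} (h : z < 0) : rsign z = -1 := by
  simp [rsign, not_lt.mpr h.le, h.ne]

lemma rho_eq_zero {z : ℝ} (h : |z| < 1/2) : rho z = 0 := by
  have hf : ⌊|z|⌋ = 0 := Int.floor_eq_zero_iff.mpr ⟨abs_nonneg z, by linarith⟩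
  have hfr : Int.fract |z| = |z| := by rw [Int.fract]; rw [hf]; simp
  rw [rho, if_pos (by rw [hfr]; exact h), hf]; ring

lemma rho_one {z : ℝ} (h1 : 1/2 ≤ z) (h2 : z < 1) : rho z = 1 := by
  have hz : 0 < z := by linarith
  have ha : |z| = z := abs_of_pos hz
  have hf : ⌊|z|⌋ = 0 := by rw [ha]; exact Int.floor_eq_zero_iff.mpr ⟨by linarith, h2⟩
  have hfr : Int.fract |z| = z := by rw [Int.fract, hf, ha]; simp
  rw [rho, if_neg (by rw [hfr]; linarith), rsign_pos hz, hf]; ring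

lemma rho_negone {z : ℝ} (h1 : -(3/2) < z) (h2 : z ≤ -1) : rho z = -1 := by
  have hz : z < 0 := by linarith
  have ha : |z| = -z := abs_of_neg hz
  have hf : ⌊|z|⌋ = 1 := by
    rw [ha, Int.floor_eq_iff]; constructor <;> push_cast <;> linarith
  have hfr : Int.fract |z| = -z - 1 := by rw [Int.fract, hf, ha]; push_cast; ring
  rw [rho, if_pos (by rw [hfr]; linarith), rsign_neg' hz, hf]; ring

lemma rsign_negz (z : ℝ) : rsign (-z) = - rsign z := by
  rcases lt_trichotomy z 0 with h|h|h
  · rw [rsign_neg' h, rsign_pos (by linarith : (0:ℝ) < -z)]; norm_num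
  · simp [h, rsign]
  · rw [rsign_pos h, rsign_neg' (by linarith : -z < 0)]

lemma rho_negz (z : ℝ) : rho (-z) = - rho z := by
  unfold rho; rw [abs_neg, rsign_negz]; split <;> ring


/-- The switched quantized control system with parameter `α` and disturbance
rounding error `Δd`, with state trajectory `(e, u)`. -/
def Traj (α Δd : ℝ) (e u : ℕ → ℝ) : Prop :=
  ∀ k : ℕ,
    e (k+1) = e k + (rho (u k) : ℝ) + Δd ∧
    u (k+1) = if rho (e (k+1)) = 0
      then ((rho (u k) : ℝ) + (rho (e k) : ℝ))
      else (u k + (rho (e k) : ℝ) - α * (rho (e (k+1)) : ℝ))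

/-- Condition (9) at time `k`. -/
def Cond9 (α Δd : ℝ) (e u : ℕ → ℝ) (k : ℕ) : Prop :=
  (-(1/2) < e k ∧ e k < 1/2) ∧
  (1 ≤ α - u k * (rsign Δd : ℝ) ∧ α - u k * (rsign Δd : ℝ) < 3/2) ∧
  (-(1/2) < u k ∧ u k < 1/2)

lemma step_pos (α Δd : ℝ) (hα1 : 1 < α) (hα2 : α < 3/2) (hd1 : 0 < Δd) (hd2 : Δd ≤ 1/2)
    (e u : ℕ → ℝ) (htraj : Traj α Δd e u) (k : ℕ) (h9 : Cond9 α Δd e u k) :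
    (e k + Δd < 1/2 ∧ Cond9 α Δd e u (k+1) ∧ e (k+1) = e k + Δd) ∨
    (Cond9 α Δd e u (k+2) ∧ rho (e (k+2)) = 0 ∧ rho (u (k+2)) = 0 ∧
     rho (e (k+1)) = 1 ∧ rho (u (k+1)) = -1) := by
  obtain ⟨⟨he1, he2⟩, ⟨ha1, ha2⟩, ⟨hu1, hu2⟩⟩ := h9
  rw [rsign_pos hd1] at ha1 ha2
  push_cast at ha1 ha2
  have hrek : rho (e k) = 0 := rho_eq_zero (abs_lt.mpr ⟨by linarith, he2⟩)
  have hruk : rho (u k) = 0 := rho_eq_zero (abs_lt.mpr ⟨by linarith, hu2⟩)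
  obtain ⟨hek1, huk1⟩ := htraj k
  rw [hruk] at hek1
  have hek1' : e (k+1) = e k + Δd := by rw [hek1]; push_cast; ring
  by_cases hc : e k + Δd < 1/2
  · -- stay case
    left
    have hre1 : rho (e (k+1)) = 0 := by
      apply rho_eq_zero; rw [hek1']; rw [abs_lt]; constructor <;> linarith
    have hu1' : u (k+1) = 0 := by rw [huk1, if_pos hre1, hruk, hrek]; norm_num
    refine ⟨hc, ⟨⟨by rw [hek1']; linarith, by rw [hek1']; linarith⟩,
      ⟨by rw [rsign_pos hd1, hu1']; push_cast; linarith,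
       by rw [rsign_pos hd1, hu1']; push_cast; linarith⟩,
      by rw [hu1']; norm_num, by rw [hu1']; norm_num⟩, hek1'⟩
  · -- jump case
    right
    push_neg at hc
    have he11 : 1/2 ≤ e (k+1) := by rw [hek1']; exact hc
    have he12 : e (k+1) < 1 := by rw [hek1']; linarith
    have hre1 : rho (e (k+1)) = 1 := rho_one he11 he12
    have hu1' : u (k+1) = u k - α := by
      rw [huk1, if_neg (by rw [hre1]; norm_num), hrek, hre1]; push_cast; ring
    have hru1 : rho (u (k+1)) = -1 := by
      apply rho_negone <;> rw [hu1'] <;> linarith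
    obtain ⟨hek2, huk2⟩ := htraj (k+1)
    rw [hru1] at hek2
    have hek2' : e (k+2) = e (k+1) - 1 + Δd := by
      rw [show k+1+1 = k+2 from rfl] at hek2; rw [hek2]; push_cast; ring
    have hre2 : rho (e (k+2)) = 0 := by
      apply rho_eq_zero; rw [hek2', abs_lt]; constructor <;> linarith
    have hu2' : u (k+2) = 0 := by
      rw [show k+1+1 = k+2 from rfl] at huk2 hre2 ⊢
      rw [huk2, if_pos hre2, hru1, hre1]; norm_num
    have hru2 : rho (u (k+2)) = 0 := by rw [hu2']; exact rho_eq_zero (by norm_num)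
    refine ⟨⟨⟨by rw [hek2']; linarith, by rw [hek2']; linarith⟩,
      ⟨by rw [rsign_pos hd1, hu2']; push_cast; linarith,
       by rw [rsign_pos hd1, hu2']; push_cast; linarith⟩,
      by rw [hu2']; norm_num, by rw [hu2']; norm_num⟩, hre2, hru2, hre1, hru1⟩

lemma escape_pos (α Δd : ℝ) (hα1 : 1 < α) (hα2 : α < 3/2) (hd1 : 0 < Δd) (hd2 : Δd ≤ 1/2)
    (e u : ℕ → ℝ) (htraj : Traj α Δd e u) :
    ∀ N : ℕ, ∀ k : ℕ, Cond9 α Δd e u k → 1/2 - e k ≤ N * Δd →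
    ∃ j : ℕ, 2 ≤ j ∧ Cond9 α Δd e u (k+j) ∧ rho (e (k+j)) = 0 ∧ rho (u (k+j)) = 0 ∧
      rho (e (k+j-1)) = 1 ∧ rho (u (k+j-1)) = -1 := by
  intro N
  induction N with
  | zero =>
    intro k h9 hN
    exfalso
    have := h9.1.2
    push_cast at hN
    linarith
  | succ N ih =>
    intro k h9 hN
    rcases step_pos α Δd hα1 hα2 hd1 hd2 e u htraj k h9 with
      ⟨hc, h9', he'⟩ | ⟨h9', hre2, hru2, hre1, hru1⟩
    · obtain ⟨j, hj2, hj9, hj1, hj2', hj3, hj4⟩ := ih (k+1) h9' (by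
        rw [he']; push_cast at hN ⊢; linarith)
      refine ⟨j+1, by omega, ?_, ?_, ?_, ?_, ?_⟩
      · rwa [show k+(j+1) = k+1+j by omega]
      · rwa [show k+(j+1) = k+1+j by omega]
      · rwa [show k+(j+1) = k+1+j by omega]
      · rwa [show k+(j+1)-1 = k+1+j-1 by omega]
      · rwa [show k+(j+1)-1 = k+1+j-1 by omega]
    · exact ⟨2, le_refl 2, h9', hre2, hru2, hre1, hru1⟩

lemma visits_pos (α Δd : ℝ) (hα1 : 1 < α) (hα2 : α < 3/2) (hd1 : 0 < Δd) (hd2 : Δd ≤ 1/2)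
    (e u : ℕ → ℝ) (htraj : Traj α Δd e u) :
    ∀ m : ℕ, ∀ k : ℕ, Cond9 α Δd e u k →
    ∃ j : ℕ, m + 1 < j ∧ Cond9 α Δd e u (k+j) ∧ rho (e (k+j)) = 0 ∧ rho (u (k+j)) = 0 ∧
      rho (e (k+j-1)) = 1 ∧ rho (u (k+j-1)) = -1 := by
  have base : ∀ k : ℕ, Cond9 α Δd e u k →
      ∃ j : ℕ, 2 ≤ j ∧ Cond9 α Δd e u (k+j) ∧ rho (e (k+j)) = 0 ∧ rho (u (k+j)) = 0 ∧
      rho (e (k+j-1)) = 1 ∧ rho (u (k+j-1)) = -1 := by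
    intro k h9
    apply escape_pos α Δd hα1 hα2 hd1 hd2 e u htraj ⌈1/Δd⌉₊ k h9
    have h1 : (1:ℝ)/Δd ≤ (⌈1/Δd⌉₊ : ℝ) := Nat.le_ceil _
    have h2 : (1:ℝ) ≤ (⌈1/Δd⌉₊ : ℝ) * Δd := by
      rw [← div_le_iff₀ hd1] at *
      linarith [h1]
    have := h9.1.1
    linarith
  intro m
  induction m with
  | zero =>
    intro k h9
    obtain ⟨j, hj, rest⟩ := base k h9
    exact ⟨j, by omega, rest⟩
  | succ m ih =>
    intro k h9
    obtain ⟨j, hj, hj9, _⟩ := ih k h9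
    obtain ⟨j2, hj2, hj29, a1, a2, a3, a4⟩ := base (k+j) hj9
    refine ⟨j + j2, by omega, ?_, ?_, ?_, ?_, ?_⟩
    · rwa [show k+(j+j2) = k+j+j2 by omega]
    · rwa [show k+(j+j2) = k+j+j2 by omega]
    · rwa [show k+(j+j2) = k+j+j2 by omega]
    · rwa [show k+(j+j2)-1 = k+j+j2-1 by omega]
    · rwa [show k+(j+j2)-1 = k+j+j2-1 by omega]

theorem stmt_1 (α Δd : ℝ) (hα : 1 < α ∧ α < 3/2) (hΔ : 0 < |Δd| ∧ |Δd| ≤ 1/2)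
    (e u : ℕ → ℝ) (htraj : Traj α Δd e u) (k : ℕ) (h9 : Cond9 α Δd e u k) :
    ∀ H : ℕ,
      (∃ h : ℕ, H < h ∧
        (rho (e (k+h)), rho (u (k+h))) = ((0 : ℤ), (0 : ℤ))) ∧
      (∃ h' : ℕ, H < h' ∧
        (rho (e (k+h')), rho (u (k+h'))) = (rsign Δd, -rsign Δd)) := by
  intro H
  obtain ⟨hα1, hα2⟩ := hα
  obtain ⟨hd0, hdb⟩ := hΔ
  have hdne : Δd ≠ 0 := by
    intro h; rw [h] at hd0; simp at hd0
  rcases hdne.lt_or_gt with hneg | hpos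
  · -- Δd < 0 : apply the positive case to the negated trajectory
    have hd1 : 0 < -Δd := by linarith
    have hd2' : -Δd ≤ 1/2 := by rw [abs_of_neg hneg] at hdb; linarith
    have htraj' : Traj α (-Δd) (fun n => -e n) (fun n => -u n) := by
      intro n
      obtain ⟨h1, h2⟩ := htraj n
      refine ⟨?_, ?_⟩
      · show -e (n+1) = -e n + ((rho (-u n) : ℤ) : ℝ) + (-Δd)
        rw [rho_negz, h1]; push_cast; ring
      · show -u (n+1) = if rho (-e (n+1)) = 0 then ((rho (-u n) : ℤ):ℝ) + ((rho (-e n):ℤ):ℝ)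
          else (-u n + ((rho (-e n):ℤ):ℝ) - α * ((rho (-e (n+1)):ℤ):ℝ))
        rw [rho_negz, rho_negz, rho_negz]
        by_cases hz : rho (e (n+1)) = 0
        · rw [if_pos (by simp [hz]), h2, if_pos hz]; push_cast; ring
        · rw [if_neg (by simpa using hz), h2, if_neg hz]; push_cast; ring
    have h9' : Cond9 α (-Δd) (fun n => -e n) (fun n => -u n) k := by
      obtain ⟨⟨p1, p2⟩, ⟨q1, q2⟩, r1, r2⟩ := h9
      have key : α - (-u k) * ((rsign (-Δd) : ℤ):ℝ) = α - u k * ((rsign Δd : ℤ):ℝ) := by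
        rw [rsign_negz]; push_cast; ring
      refine ⟨⟨?_, ?_⟩, ⟨?_, ?_⟩, ?_, ?_⟩
      · show -(1/2) < -e k; linarith
      · show -e k < 1/2; linarith
      · show 1 ≤ α - -u k * ((rsign (-Δd) : ℤ):ℝ); rw [show α - -u k * ((rsign (-Δd) : ℤ):ℝ) = α - (-u k) * ((rsign (-Δd) : ℤ):ℝ) by ring, key]; exact q1
      · show α - -u k * ((rsign (-Δd) : ℤ):ℝ) < 3/2; rw [show α - -u k * ((rsign (-Δd) : ℤ):ℝ) = α - (-u k) * ((rsign (-Δd) : ℤ):ℝ) by ring, key]; exact q2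
      · show -(1/2) < -u k; linarith
      · show -u k < 1/2; linarith
    obtain ⟨j, hj, _, a1, a2, a3, a4⟩ :=
      visits_pos α (-Δd) hα1 hα2 hd1 hd2' _ _ htraj' H k h9'
    simp only [rho_negz, neg_eq_zero] at a1 a2
    have a3' : rho (e (k+j-1)) = -1 := by
      have := a3; simp only [rho_negz] at this; omega
    have a4' : rho (u (k+j-1)) = 1 := by
      have := a4; simp only [rho_negz] at this; omega
    refine ⟨⟨j, by omega, by rw [a1, a2]⟩, ⟨j-1, by omega, ?_⟩⟩
    rw [rsign_neg' hneg, show k+(j-1) = k+j-1 by omega, a3', a4']; norm_num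
  · -- Δd > 0
    have hd2' : Δd ≤ 1/2 := by rwa [abs_of_pos hpos] at hdb
    obtain ⟨j, hj, _, a1, a2, a3, a4⟩ :=
      visits_pos α Δd hα1 hα2 hpos hd2' e u htraj H k h9
    refine ⟨⟨j, by omega, by rw [a1, a2]⟩, ⟨j-1, by omega, ?_⟩⟩
    rw [rsign_pos hpos, show k+(j-1) = k+j-1 by omega, a3, a4]
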